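/- For every prime power q there exists a partial affine plane of order q² with exactly q⁴ − q lines in which parallelism is an equivalence relation on the line set and which cannot be completed to an affine plane of order q². -/
import Mathlib


open Finset

set_option linter.unusedSectionVars false
open Finset Polynomial

namespace Stmt14

variable {K : Type} [Field K] [DecidableEq K]

abbrev V3 (K : Type) := K × K × K

def dot (a x : V3 K) : K := a.1 * x.1 + a.2.1 * x.2.1 + a.2.2 * x.2.2

def cross (v w : V3 K) : V3 K :=
  (v.2.1 * w.2.2 - v.2.2 * w.2.1, v.2.2 * w.1 - v.1 * w.2.2, v.1 * w.2.1 - v.2.1 * w.1)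

def sm (c : K) (v : V3 K) : V3 K := (c * v.1, c * v.2.1, c * v.2.2)

lemma v3_ext {v w : V3 K} (h1 : v.1 = w.1) (h2 : v.2.1 = w.2.1) (h3 : v.2.2 = w.2.2) : v = w := by
  cases v with
  | mk a b => cases b; cases w with
    | mk c d => cases d; simp_all

lemma v3_zero_iff {v : V3 K} : v = 0 ↔ v.1 = 0 ∧ v.2.1 = 0 ∧ v.2.2 = 0 := by
  constructor
  · rintro rfl; exact ⟨rfl, rfl, rfl⟩
  · rintro ⟨h1, h2, h3⟩; exact v3_ext h1 h2 h3

@[simp] lemma sm_one (v : V3 K) : sm 1 v = v := by simp [sm]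

lemma sm_sm (c d : K) (v : V3 K) : sm c (sm d v) = sm (c * d) v := by
  simp [sm]; exact ⟨by ring, by ring, by ring⟩

lemma sm_eq_zero_iff {c : K} {v : V3 K} : sm c v = 0 ↔ c = 0 ∨ v = 0 := by
  constructor
  · intro h
    rcases eq_or_ne c 0 with hc | hc
    · exact Or.inl hc
    · refine Or.inr ?_
      rw [v3_zero_iff] at h ⊢
      simp [sm] at h
      exact ⟨by rcases h.1 with h|h; exact absurd h hc; exact h,
             by rcases h.2.1 with h|h; exact absurd h hc; exact h,
             by rcases h.2.2 with h|h; exact absurd h hc; exact h⟩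
  · rintro (rfl | rfl) <;> simp [sm] <;> exact v3_ext (by simp [sm]) (by simp [sm]) (by simp [sm])

lemma dot_comm (a x : V3 K) : dot a x = dot x a := by simp [dot]; ring

lemma dot_sm_right (a : V3 K) (c : K) (x : V3 K) : dot a (sm c x) = c * dot a x := by
  simp [dot, sm]; ring

lemma dot_sub_right (a x y : V3 K) : dot a (x - y) = dot a x - dot a y := by
  simp [dot, Prod.fst_sub, Prod.snd_sub]; ring

lemma cross_dot_left (v w : V3 K) : dot (cross v w) v = 0 := by simp [dot, cross]; ring

lemma cross_dot_right (v w : V3 K) : dot (cross v w) w = 0 := by simp [dot, cross]; ring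

/-- Lagrange identity: z × (v × w) = ⟨z,w⟩ v − ⟨z,v⟩ w. -/
lemma cross_cross (z v w : V3 K) :
    cross z (cross v w) = sm (dot z w) v - sm (dot z v) w := by
  refine v3_ext ?_ ?_ ?_ <;> simp [cross, dot, sm, Prod.fst_sub, Prod.snd_sub] <;> ring

lemma cross_anticomm (v w : V3 K) : cross v w = - cross w v := by
  refine v3_ext ?_ ?_ ?_ <;> simp [cross] <;> ring

/-- If v ≠ 0 and v × w = 0 then w is a multiple of v. -/
lemma cross_eq_zero_imp {v w : V3 K} (hv : v ≠ 0) (h : cross v w = 0) :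
    ∃ c : K, w = sm c v := by
  rw [v3_zero_iff] at h
  simp only [cross] at h
  obtain ⟨h1, h2, h3⟩ := h
  have hv' : ¬(v.1 = 0 ∧ v.2.1 = 0 ∧ v.2.2 = 0) := fun hc => hv (v3_zero_iff.mpr hc)
  by_cases e1 : v.1 = 0
  · rw [e1] at h2 h3
    simp only [zero_mul, sub_zero, mul_zero, zero_sub, neg_eq_zero] at h2 h3
    by_cases e2 : v.2.1 = 0
    · have e3 : v.2.2 ≠ 0 := by by_contra hc; exact hv' ⟨e1, e2, hc⟩
      rw [e2] at h1
      simp only [zero_mul, zero_sub, neg_eq_zero] at h1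
      refine ⟨w.2.2 / v.2.2, v3_ext ?_ ?_ ?_⟩ <;> simp [sm, e1, e2]
      · rcases mul_eq_zero.mp h2 with hc | hc
        · exact absurd hc e3
        · exact hc
      · rcases mul_eq_zero.mp h1 with hc | hc
        · exact absurd hc e3
        · exact hc
      · field_simp
    · refine ⟨w.2.1 / v.2.1, v3_ext ?_ ?_ ?_⟩ <;> simp [sm, e1]
      · rcases mul_eq_zero.mp h3 with hc | hc
        · exact absurd hc e2
        · exact hc
      · field_simp
      · rw [div_mul_eq_mul_div, eq_comm, div_eq_iff e2]
        first
        | linear_combination h1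
        | linear_combination -h1
  · refine ⟨w.1 / v.1, v3_ext ?_ ?_ ?_⟩ <;> simp [sm] <;>
      rw [div_mul_eq_mul_div, eq_comm, div_eq_iff e1] <;>
      (first | ring1 | linear_combination h1 | linear_combination -h1 | linear_combination h2 | linear_combination -h2 | linear_combination h3 | linear_combination -h3)

def norm3 (v : V3 K) : V3 K :=
  if v.1 ≠ 0 then sm v.1⁻¹ v else if v.2.1 ≠ 0 then sm v.2.1⁻¹ v else sm v.2.2⁻¹ v

def Nzd (v : V3 K) : Prop :=
  v.1 = 1 ∨ (v.1 = 0 ∧ v.2.1 = 1) ∨ (v.1 = 0 ∧ v.2.1 = 0 ∧ v.2.2 = 1)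

instance : DecidablePred (Nzd (K := K)) := fun v => by unfold Nzd; infer_instance

lemma Nzd.ne_zero {v : V3 K} (h : Nzd v) : v ≠ 0 := by
  rintro rfl
  rcases h with h | h | h
  · exact one_ne_zero h.symm
  · exact one_ne_zero h.2.symm
  · exact one_ne_zero h.2.2.symm

@[simp] lemma sm_zero_left (v : V3 K) : sm (0 : K) v = 0 := by
  refine v3_ext ?_ ?_ ?_ <;> simp [sm]

lemma Nzd_norm3 {v : V3 K} (hv : v ≠ 0) : Nzd (norm3 v) := by
  have hv' : ¬(v.1 = 0 ∧ v.2.1 = 0 ∧ v.2.2 = 0) := fun hc => hv (v3_zero_iff.mpr hc)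
  by_cases e1 : v.1 = 0
  · by_cases e2 : v.2.1 = 0
    · have e3 : v.2.2 ≠ 0 := fun hc => hv' ⟨e1, e2, hc⟩
      have h : norm3 v = sm v.2.2⁻¹ v := by simp [norm3, e1, e2]
      rw [h]
      exact Or.inr (Or.inr ⟨by simp [sm, e1], by simp [sm, e2],
        by simp only [sm]; exact inv_mul_cancel₀ e3⟩)
    · have h : norm3 v = sm v.2.1⁻¹ v := by simp [norm3, e1, e2]
      rw [h]
      exact Or.inr (Or.inl ⟨by simp [sm, e1], by simp only [sm]; exact inv_mul_cancel₀ e2⟩)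
  · have h : norm3 v = sm v.1⁻¹ v := by simp [norm3, e1]
    rw [h]
    exact Or.inl (by simp only [sm]; exact inv_mul_cancel₀ e1)

lemma norm3_of_Nzd {v : V3 K} (h : Nzd v) : norm3 v = v := by
  rcases h with h | h | h
  · simp [norm3, h]
  · simp [norm3, h.1, h.2]
  · simp [norm3, h.1, h.2.1, h.2.2]

lemma sm_norm3 {v : V3 K} (hv : v ≠ 0) :
    ∃ c : K, (c = v.1 ∨ c = v.2.1 ∨ c = v.2.2) ∧ c ≠ 0 ∧ v = sm c (norm3 v) := by
  have hv' : ¬(v.1 = 0 ∧ v.2.1 = 0 ∧ v.2.2 = 0) := fun hc => hv (v3_zero_iff.mpr hc)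
  unfold norm3
  by_cases e1 : v.1 = 0
  · by_cases e2 : v.2.1 = 0
    · have e3 : v.2.2 ≠ 0 := fun hc => hv' ⟨e1, e2, hc⟩
      refine ⟨v.2.2, Or.inr (Or.inr rfl), e3, ?_⟩
      simp [e1, e2, sm_sm, mul_inv_cancel₀ e3]
    · refine ⟨v.2.1, Or.inr (Or.inl rfl), e2, ?_⟩
      simp [e1, e2, sm_sm, mul_inv_cancel₀ e2]
  · refine ⟨v.1, Or.inl rfl, e1, ?_⟩
    simp [e1, sm_sm, mul_inv_cancel₀ e1]

lemma norm3_sm {c : K} {v : V3 K} (hc : c ≠ 0) (hv : v ≠ 0) : norm3 (sm c v) = norm3 v := by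
  have hv' : ¬(v.1 = 0 ∧ v.2.1 = 0 ∧ v.2.2 = 0) := fun hcc => hv (v3_zero_iff.mpr hcc)
  have key : ∀ d : K, d ≠ 0 → (c * d)⁻¹ * c = d⁻¹ := by
    intro d hd; field_simp
  by_cases e1 : v.1 = 0
  · by_cases e2 : v.2.1 = 0
    · have e3 : v.2.2 ≠ 0 := fun hcc => hv' ⟨e1, e2, hcc⟩
      have h1 : norm3 (sm c v) = sm (c * v.2.2)⁻¹ (sm c v) := by
        simp [norm3, sm, e1, e2]
      have h2 : norm3 v = sm v.2.2⁻¹ v := by simp [norm3, e1, e2]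
      rw [h1, h2, sm_sm, key _ e3]
    · have h1 : norm3 (sm c v) = sm (c * v.2.1)⁻¹ (sm c v) := by
        simp [norm3, sm, e1, e2, hc]
      have h2 : norm3 v = sm v.2.1⁻¹ v := by simp [norm3, e1, e2]
      rw [h1, h2, sm_sm, key _ e2]
  · have h1 : norm3 (sm c v) = sm (c * v.1)⁻¹ (sm c v) := by
      simp [norm3, sm, e1, hc]
    have h2 : norm3 v = sm v.1⁻¹ v := by simp [norm3, e1]
    rw [h1, h2, sm_sm, key _ e1]

/-- Two normalized proportional vectors are equal. -/
lemma Nzd_eq_of_sm {v w : V3 K} (hv : Nzd v) (hw : Nzd w) {c : K} (h : w = sm c v) : w = v := by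
  have hc : c ≠ 0 := by
    rintro rfl
    rw [sm_zero_left] at h
    exact hw.ne_zero h
  calc w = norm3 w := (norm3_of_Nzd hw).symm
  _ = norm3 (sm c v) := by rw [h]
  _ = norm3 v := norm3_sm hc hv.ne_zero
  _ = v := norm3_of_Nzd hv

section counting

variable [Fintype K]

/-- A sub-field-like finset. -/
structure SubF (Φ : Finset K) : Prop where
  zero : (0 : K) ∈ Φ
  one : (1 : K) ∈ Φ
  add : ∀ x ∈ Φ, ∀ y ∈ Φ, x + y ∈ Φ
  neg : ∀ x ∈ Φ, -x ∈ Φ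
  mul : ∀ x ∈ Φ, ∀ y ∈ Φ, x * y ∈ Φ
  inv : ∀ x ∈ Φ, x⁻¹ ∈ Φ

lemma SubF.sub {Φ : Finset K} (h : SubF Φ) {x y : K} (hx : x ∈ Φ) (hy : y ∈ Φ) :
    x - y ∈ Φ := by
  rw [sub_eq_add_neg]; exact h.add x hx _ (h.neg y hy)

lemma SubF.univ : SubF (Finset.univ : Finset K) :=
  ⟨mem_univ _, mem_univ _, fun _ _ _ _ => mem_univ _, fun _ _ => mem_univ _,
   fun _ _ _ _ => mem_univ _, fun _ _ => mem_univ _⟩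

def inΦ (Φ : Finset K) (v : V3 K) : Prop := v.1 ∈ Φ ∧ v.2.1 ∈ Φ ∧ v.2.2 ∈ Φ

instance (Φ : Finset K) : DecidablePred (inΦ Φ) := fun v => by unfold inΦ; infer_instance

def vecΦ (Φ : Finset K) : Finset (V3 K) := Finset.univ.filter (inΦ Φ)

lemma mem_vecΦ {Φ : Finset K} {v : V3 K} : v ∈ vecΦ Φ ↔ inΦ Φ v := by
  simp [vecΦ]

lemma card_vecΦ (Φ : Finset K) : (vecΦ Φ).card = Φ.card ^ 3 := by
  have : vecΦ Φ = Φ ×ˢ (Φ ×ˢ Φ) := by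
    ext v; simp [mem_vecΦ, inΦ, Finset.mem_product]
  rw [this, Finset.card_product, Finset.card_product]
  ring

lemma dot_mem {Φ : Finset K} (hΦ : SubF Φ) {a x : V3 K} (ha : inΦ Φ a) (hx : inΦ Φ x) :
    dot a x ∈ Φ := by
  unfold dot
  exact hΦ.add _ (hΦ.add _ (hΦ.mul _ ha.1 _ hx.1) _ (hΦ.mul _ ha.2.1 _ hx.2.1)) _
    (hΦ.mul _ ha.2.2 _ hx.2.2)

lemma sm_mem {Φ : Finset K} (hΦ : SubF Φ) {c : K} (hc : c ∈ Φ) {x : V3 K} (hx : inΦ Φ x) :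
    inΦ Φ (sm c x) :=
  ⟨hΦ.mul _ hc _ hx.1, hΦ.mul _ hc _ hx.2.1, hΦ.mul _ hc _ hx.2.2⟩

lemma sub_mem3 {Φ : Finset K} (hΦ : SubF Φ) {x y : V3 K} (hx : inΦ Φ x) (hy : inΦ Φ y) :
    inΦ Φ (x - y) :=
  ⟨hΦ.sub hx.1 hy.1, hΦ.sub hx.2.1 hy.2.1, hΦ.sub hx.2.2 hy.2.2⟩

lemma exists_dot_one {Φ : Finset K} (hΦ : SubF Φ) {a : V3 K} (ha : a ≠ 0) (haΦ : inΦ Φ a) :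
    ∃ x₀ : V3 K, inΦ Φ x₀ ∧ dot a x₀ = 1 := by
  have hv' : ¬(a.1 = 0 ∧ a.2.1 = 0 ∧ a.2.2 = 0) := fun hc => ha (v3_zero_iff.mpr hc)
  by_cases e1 : a.1 = 0
  · by_cases e2 : a.2.1 = 0
    · have e3 : a.2.2 ≠ 0 := fun hc => hv' ⟨e1, e2, hc⟩
      exact ⟨(0, 0, a.2.2⁻¹), ⟨hΦ.zero, hΦ.zero, hΦ.inv _ haΦ.2.2⟩,
        by simp [dot, mul_inv_cancel₀ e3]⟩
    · exact ⟨(0, a.2.1⁻¹, 0), ⟨hΦ.zero, hΦ.inv _ haΦ.2.1, hΦ.zero⟩,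
        by simp [dot, mul_inv_cancel₀ e2]⟩
  · exact ⟨(a.1⁻¹, 0, 0), ⟨hΦ.inv _ haΦ.1, hΦ.zero, hΦ.zero⟩,
      by simp [dot, mul_inv_cancel₀ e1]⟩

lemma card_ker {Φ : Finset K} (hΦ : SubF Φ) {a : V3 K} (ha : a ≠ 0) (haΦ : inΦ Φ a) :
    Φ.card * ((vecΦ Φ).filter (fun x => dot a x = 0)).card = Φ.card ^ 3 := by
  obtain ⟨x₀, hx₀Φ, hx₀⟩ := exists_dot_one hΦ ha haΦ
  have hmaps : ∀ x ∈ vecΦ Φ, dot a x ∈ Φ :=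
    fun x hx => dot_mem hΦ haΦ (mem_vecΦ.mp hx)
  have hsum := Finset.card_eq_sum_card_fiberwise hmaps
  have hfib : ∀ t ∈ Φ, ((vecΦ Φ).filter (fun x => dot a x = t)).card
      = ((vecΦ Φ).filter (fun x => dot a x = 0)).card := by
    intro t ht
    apply Finset.card_bij' (fun x _ => x - sm t x₀) (fun y _ => y + sm t x₀)
    · intro x hx
      simp only [Finset.mem_filter] at hx ⊢
      refine ⟨mem_vecΦ.mpr (sub_mem3 hΦ (mem_vecΦ.mp hx.1) (sm_mem hΦ ht hx₀Φ)), ?_⟩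
      rw [dot_sub_right, dot_sm_right, hx.2, hx₀, mul_one, sub_self]
    · intro y hy
      simp only [Finset.mem_filter] at hy ⊢
      constructor
      · rw [mem_vecΦ]
        have := sub_mem3 hΦ (mem_vecΦ.mp hy.1) (sm_mem hΦ (hΦ.neg _ ht) hx₀Φ)
        have he : y + sm t x₀ = y - sm (-t) x₀ := by
          refine v3_ext ?_ ?_ ?_ <;> simp [sm, Prod.fst_sub, Prod.snd_sub, Prod.fst_add, Prod.snd_add] <;> ring
        rw [he]
        exact sub_mem3 hΦ (mem_vecΦ.mp hy.1) (sm_mem hΦ (hΦ.neg _ ht) hx₀Φ)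
      · have : dot a (y + sm t x₀) = dot a y + t * dot a x₀ := by
          simp [dot, sm, Prod.fst_add, Prod.snd_add]; ring
        rw [this, hy.2, hx₀, mul_one, zero_add]
    · intro x hx
      refine v3_ext ?_ ?_ ?_ <;>
        simp [sm, Prod.fst_sub, Prod.snd_sub, Prod.fst_add, Prod.snd_add]
    · intro y hy
      refine v3_ext ?_ ?_ ?_ <;>
        simp [sm, Prod.fst_sub, Prod.snd_sub, Prod.fst_add, Prod.snd_add]
  rw [Finset.sum_congr rfl hfib, Finset.sum_const, smul_eq_mul] at hsum
  rw [← hsum, card_vecΦ]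

end counting

section proj

variable [Fintype K]

lemma sm_inj {v : V3 K} (hv : v ≠ 0) {c c' : K} (h : sm c v = sm c' v) : c = c' := by
  have hv' : ¬(v.1 = 0 ∧ v.2.1 = 0 ∧ v.2.2 = 0) := fun hc => hv (v3_zero_iff.mpr hc)
  have h1 : c * v.1 = c' * v.1 := congrArg Prod.fst h
  have h2 : c * v.2.1 = c' * v.2.1 := congrArg (fun w => w.2.1) h
  have h3 : c * v.2.2 = c' * v.2.2 := congrArg (fun w => w.2.2) h
  by_cases e1 : v.1 = 0
  · by_cases e2 : v.2.1 = 0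
    · have e3 : v.2.2 ≠ 0 := fun hc => hv' ⟨e1, e2, hc⟩
      exact mul_right_cancel₀ e3 h3
    · exact mul_right_cancel₀ e2 h2
  · exact mul_right_cancel₀ e1 h1

lemma norm3_mem_of_mem {Φ : Finset K} (hΦ : SubF Φ) {W : Finset (V3 K)}
    (h0 : (0 : V3 K) ∉ W)
    (hcoords : ∀ v ∈ W, inΦ Φ v)
    (hstab : ∀ v ∈ W, ∀ c ∈ Φ, c ≠ 0 → sm c v ∈ W)
    {v : V3 K} (hv : v ∈ W) : norm3 v ∈ W := by
  have hvne : v ≠ 0 := fun hc => h0 (hc ▸ hv)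
  obtain ⟨c, hcc, hcne, hveq⟩ := sm_norm3 hvne
  have hcΦ : c ∈ Φ := by
    rcases hcc with h | h | h <;> rw [h]
    · exact (hcoords v hv).1
    · exact (hcoords v hv).2.1
    · exact (hcoords v hv).2.2
  have heq : sm c⁻¹ v = norm3 v := by
    conv_lhs => rw [hveq]
    rw [sm_sm, inv_mul_cancel₀ hcne, sm_one]
  rw [← heq]
  exact hstab v hv _ (hΦ.inv _ hcΦ) (inv_ne_zero hcne)

lemma card_proj {Φ : Finset K} (hΦ : SubF Φ) {W : Finset (V3 K)}
    (h0 : (0 : V3 K) ∉ W)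
    (hcoords : ∀ v ∈ W, inΦ Φ v)
    (hstab : ∀ v ∈ W, ∀ c ∈ Φ, c ≠ 0 → sm c v ∈ W) :
    W.card = (W.filter (fun v => Nzd v)).card * (Φ.card - 1) := by
  classical
  have hmaps : ∀ v ∈ W, norm3 v ∈ W.filter (fun v => Nzd v) := by
    intro v hv
    rw [Finset.mem_filter]
    exact ⟨norm3_mem_of_mem hΦ h0 hcoords hstab hv,
      Nzd_norm3 (fun hc => h0 (hc ▸ hv))⟩
  have hsum := Finset.card_eq_sum_card_fiberwise hmaps
  have hfib : ∀ v ∈ W.filter (fun v => Nzd v),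
      (W.filter (fun w => norm3 w = v)).card = Φ.card - 1 := by
    intro v hv
    rw [Finset.mem_filter] at hv
    have hvnzd : Nzd v := hv.2
    have hvne : v ≠ 0 := hvnzd.ne_zero
    rw [← Finset.card_erase_of_mem hΦ.zero]
    symm
    apply Finset.card_bij (fun c _ => sm c v)
    · intro c hc
      rw [Finset.mem_erase] at hc
      rw [Finset.mem_filter]
      exact ⟨hstab v hv.1 c hc.2 hc.1,
        by rw [norm3_sm hc.1 hvne, norm3_of_Nzd hvnzd]⟩
    · intro c hc c' hc' h
      exact sm_inj hvne h
    · intro w hw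
      rw [Finset.mem_filter] at hw
      have hwne : w ≠ 0 := fun hc => h0 (hc ▸ hw.1)
      obtain ⟨c, hcc, hcne, hweq⟩ := sm_norm3 hwne
      have hcΦ : c ∈ Φ := by
        rcases hcc with h | h | h <;> rw [h]
        · exact (hcoords w hw.1).1
        · exact (hcoords w hw.1).2.1
        · exact (hcoords w hw.1).2.2
      refine ⟨c, Finset.mem_erase.mpr ⟨hcne, hcΦ⟩, ?_⟩
      rw [← hw.2]; exact hweq.symm
  rw [Finset.sum_congr rfl hfib, Finset.sum_const, smul_eq_mul] at hsum
  exact hsum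

end proj

section subfield

variable [Fintype K]

/-- The number of `y` with `y^q = c*y` is at most `q`. -/
lemma card_pow_eq_le (c : K) {q : ℕ} (hq : 2 ≤ q) :
    (Finset.univ.filter (fun y : K => y ^ q = c * y)).card ≤ q := by
  classical
  set P : K[X] := X ^ q - C c * X with hP
  have hdegX : (C c * X : K[X]).natDegree < (X ^ q : K[X]).natDegree := by
    rw [natDegree_X_pow]
    calc (C c * X : K[X]).natDegree ≤ (X : K[X]).natDegree := natDegree_C_mul_le c X
    _ = 1 := natDegree_X
    _ < q := by omega
  have hdeg : P.natDegree = q := by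
    rw [hP, natDegree_sub_eq_left_of_natDegree_lt hdegX, natDegree_X_pow]
  have hPne : P ≠ 0 := by
    intro h
    rw [h, natDegree_zero] at hdeg
    omega
  have hsub : Finset.univ.filter (fun y : K => y ^ q = c * y) ⊆ P.roots.toFinset := by
    intro y hy
    rw [Finset.mem_filter] at hy
    rw [Multiset.mem_toFinset, mem_roots hPne]
    simp only [IsRoot.def, hP, eval_sub, eval_pow, eval_X, eval_mul, eval_C]
    rw [hy.2, sub_self]
  calc (Finset.univ.filter (fun y : K => y ^ q = c * y)).card
      ≤ P.roots.toFinset.card := Finset.card_le_card hsub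
    _ ≤ Multiset.card P.roots := Multiset.toFinset_card_le _
    _ ≤ P.natDegree := P.card_roots'
    _ = q := hdeg

variable {p e q : ℕ} [Fact p.Prime] [CharP K p]

def Fq (q : ℕ) : Finset K := Finset.univ.filter (fun x => x ^ q = x)

lemma mem_Fq {q : ℕ} {x : K} : x ∈ Fq q ↔ x ^ q = x := by simp [Fq]

lemma SubF_Fq (hq0 : q ≠ 0) (hpe : q = p ^ e) : SubF (Fq (K := K) q) := by
  constructor
  · rw [mem_Fq]; exact zero_pow hq0
  · rw [mem_Fq]; exact one_pow q
  · intro x hx y hy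
    rw [mem_Fq] at hx hy ⊢
    subst hpe
    rw [add_pow_char_pow, hx, hy]
  · intro x hx
    rw [mem_Fq] at hx ⊢
    subst hpe
    have hp0 : (p : ℕ) ≠ 0 := (Fact.out (p := p.Prime)).pos.ne'
    calc (-x) ^ p ^ e = (0 - x) ^ p ^ e := by rw [zero_sub]
    _ = 0 ^ p ^ e - x ^ p ^ e := sub_pow_char_pow 0 x e
    _ = -x := by rw [hx, zero_pow (pow_ne_zero e hp0), zero_sub]
  · intro x hx y hy
    rw [mem_Fq] at hx hy ⊢
    rw [mul_pow, hx, hy]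
  · intro x hx
    rw [mem_Fq] at hx ⊢
    rw [inv_pow, hx]

lemma card_Fq (hq2 : 2 ≤ q) (hpe : q = p ^ e) (hcard : Fintype.card K = q ^ 2) :
    (Fq (K := K) q).card = q := by
  classical
  have hupper : (Fq (K := K) q).card ≤ q := by
    have he : Fq (K := K) q = Finset.univ.filter (fun y : K => y ^ q = (1 : K) * y) := by
      ext y; simp [Fq, one_mul]
    rw [he]; exact card_pow_eq_le 1 hq2
  set g : K → K := fun x => x ^ q - x with hg
  have hgadd : ∀ x y : K, g (x + y) = g x + g y := by
    intro x y
    simp only [hg]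
    have h5 : (x + y) ^ q = x ^ q + y ^ q := by
      subst hpe; exact add_pow_char_pow x y e (p := p)
    rw [h5]; ring
  have hgker : ∀ x : K, g x = 0 ↔ x ∈ Fq (K := K) q := by
    intro x; rw [mem_Fq]; simp only [hg]; constructor
    · intro h; exact sub_eq_zero.mp h
    · intro h; rw [h, sub_self]
  have himroots : ∀ x : K, (g x) ^ q = (-1 : K) * (g x) := by
    intro x
    have hx2 : x ^ (q * q) = x := by
      rw [← pow_two, ← hcard]; exact FiniteField.pow_card x
    simp only [hg]
    have h1 : (x ^ q - x) ^ q = (x ^ q) ^ q - x ^ q := by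
      subst hpe; exact sub_pow_char_pow (x ^ p ^ e) x e (p := p)
    rw [h1, ← pow_mul, hx2]; ring
  -- fiber counting
  set Im : Finset K := Finset.univ.image g with hIm
  have hmaps : ∀ x : K, x ∈ (Finset.univ : Finset K) → g x ∈ Im := by
    intro x _; rw [hIm]; exact Finset.mem_image_of_mem g (Finset.mem_univ x)
  have hsum := Finset.card_eq_sum_card_fiberwise hmaps
  have hfib : ∀ y ∈ Im, (Finset.univ.filter (fun x => g x = y)).card
      = (Fq (K := K) q).card := by
    intro y hy
    rw [hIm, Finset.mem_image] at hy
    obtain ⟨x₀, _, hx₀⟩ := hy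
    symm
    apply Finset.card_bij (fun c _ => x₀ + c)
    · intro c hc
      rw [Finset.mem_filter]
      refine ⟨Finset.mem_univ _, ?_⟩
      rw [hgadd, hx₀, (hgker c).mpr hc, add_zero]
    · intro c _ c' _ h
      exact add_left_cancel h
    · intro x hx
      rw [Finset.mem_filter] at hx
      refine ⟨x - x₀, ?_, by ring⟩
      rw [← hgker]
      have h6 : x₀ + (x - x₀) = x := by ring
      have h7 : g x = g x₀ + g (x - x₀) := by rw [← hgadd, h6]
      rw [hx.2, hx₀] at h7
      exact (left_eq_add.mp h7)
  rw [Finset.sum_congr rfl hfib, Finset.sum_const, smul_eq_mul] at hsum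
  have himb : Im.card ≤ q := by
    have hsubs : Im ⊆ Finset.univ.filter (fun y : K => y ^ q = (-1 : K) * y) := by
      intro y hy
      rw [hIm, Finset.mem_image] at hy
      obtain ⟨x, _, rfl⟩ := hy
      rw [Finset.mem_filter]
      exact ⟨Finset.mem_univ _, himroots x⟩
    exact le_trans (Finset.card_le_card hsubs) (card_pow_eq_le (-1) hq2)
  rw [Finset.card_univ, hcard] at hsum
  have hlow : q ≤ (Fq (K := K) q).card := by
    by_contra hlt
    push_neg at hlt
    have h1 : q ^ 2 < q * q := by
      calc q ^ 2 = Im.card * (Fq (K := K) q).card := hsum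
      _ ≤ q * (Fq (K := K) q).card := Nat.mul_le_mul_right _ himb
      _ < q * q := by
          apply Nat.mul_lt_mul_of_le_of_lt (le_refl q) hlt
          omega
    rw [pow_two] at h1
    omega
  omega

end subfield

section geom

variable [Fintype K]

lemma natid3 {m : ℕ} (hm : 1 ≤ m) : (m ^ 2 + m + 1) * (m - 1) = m ^ 3 - 1 := by
  have h3 : 1 ≤ m ^ 3 := Nat.one_le_pow _ _ hm
  zify [hm, h3]
  ring

lemma natid2 {m : ℕ} (hm : 1 ≤ m) : (m + 1) * (m - 1) = m ^ 2 - 1 := by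
  have h2 : 1 ≤ m ^ 2 := Nat.one_le_pow _ _ hm
  zify [hm, h2]
  ring

def Pts : Finset (V3 K) := Finset.univ.filter Nzd

lemma mem_Pts {v : V3 K} : v ∈ Pts ↔ Nzd v := by simp [Pts]

variable (K) in
/-- number of projective points : q⁴+q²+1 where q² = |K| -/
lemma card_Pts {m : ℕ} (hm : 2 ≤ m) (hcard : Fintype.card K = m) :
    (Pts : Finset (V3 K)).card = m ^ 2 + m + 1 := by
  classical
  set W : Finset (V3 K) := Finset.univ.filter (fun v => v ≠ 0) with hW
  have h0 : (0 : V3 K) ∉ W := by simp [hW]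
  have hcoords : ∀ v ∈ W, inΦ (Finset.univ : Finset K) v := by
    intro v _; exact ⟨Finset.mem_univ _, Finset.mem_univ _, Finset.mem_univ _⟩
  have hstab : ∀ v ∈ W, ∀ c ∈ (Finset.univ : Finset K), c ≠ 0 → sm c v ∈ W := by
    intro v hv c _ hc
    simp only [hW, Finset.mem_filter, Finset.mem_univ, true_and] at hv ⊢
    intro hcon
    rcases sm_eq_zero_iff.mp hcon with h | h
    · exact hc h
    · exact hv h
  have hproj := card_proj SubF.univ h0 hcoords hstab
  have hWcard : W.card = m ^ 3 - 1 := by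
    have : W = Finset.univ.erase 0 := by
      ext v; simp [hW, Finset.mem_erase, and_comm]
    have hV : Fintype.card (V3 K) = m ^ 3 := by
      show Fintype.card (K × K × K) = m ^ 3
      rw [Fintype.card_prod, Fintype.card_prod, hcard]; ring
    rw [this, Finset.card_erase_of_mem (Finset.mem_univ _), Finset.card_univ, hV]
  have hfilter : W.filter (fun v => Nzd v) = Pts := by
    ext v
    simp only [hW, Pts, Finset.mem_filter, Finset.mem_univ, true_and]
    exact ⟨fun h => h.2, fun h => ⟨h.ne_zero, h⟩⟩
  rw [hWcard, hfilter, Finset.card_univ, hcard] at hproj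
  apply Nat.eq_of_mul_eq_mul_right (show 0 < m - 1 by omega)
  rw [← hproj, natid3 (by omega)]

/-- the cardinality of the kernel of a nonzero functional, over a subfield-like Φ -/
lemma card_kerΦ {Φ : Finset K} (hΦ : SubF Φ) {a : V3 K} (ha : a ≠ 0) (haΦ : inΦ Φ a) :
    ((vecΦ Φ).filter (fun x => dot a x = 0)).card = Φ.card ^ 2 := by
  have h := card_ker hΦ ha haΦ
  have hΦpos : 0 < Φ.card := Finset.card_pos.mpr ⟨0, hΦ.zero⟩
  apply Nat.eq_of_mul_eq_mul_left hΦpos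
  rw [h]; ring

/-- the projective count of a line over a subfield-like Φ : Φ.card + 1 points -/
lemma card_lineΦ {Φ : Finset K} (hΦ : SubF Φ) {a : V3 K} (ha : a ≠ 0) (haΦ : inΦ Φ a)
    (hΦ2 : 2 ≤ Φ.card) :
    (((vecΦ Φ).filter (fun x => dot a x = 0)).filter (fun v => Nzd v)).card * (Φ.card - 1)
      = Φ.card ^ 2 - 1 := by
  classical
  set W : Finset (V3 K) := ((vecΦ Φ).filter (fun x => dot a x = 0)).erase 0 with hW
  have h0 : (0 : V3 K) ∉ W := Finset.notMem_erase _ _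
  have hcoords : ∀ v ∈ W, inΦ Φ v := by
    intro v hv
    rw [hW, Finset.mem_erase, Finset.mem_filter, mem_vecΦ] at hv
    exact hv.2.1
  have hstab : ∀ v ∈ W, ∀ c ∈ Φ, c ≠ 0 → sm c v ∈ W := by
    intro v hv c hc hcne
    rw [hW, Finset.mem_erase, Finset.mem_filter, mem_vecΦ] at hv ⊢
    refine ⟨?_, sm_mem hΦ hc hv.2.1, by rw [dot_sm_right, hv.2.2, mul_zero]⟩
    intro hcon
    rcases sm_eq_zero_iff.mp hcon with h | h
    · exact hcne h
    · exact hv.1 h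
  have hproj := card_proj hΦ h0 hcoords hstab
  have hWcard : W.card = Φ.card ^ 2 - 1 := by
    rw [hW, Finset.card_erase_of_mem, card_kerΦ hΦ ha haΦ]
    rw [Finset.mem_filter, mem_vecΦ]
    exact ⟨⟨hΦ.zero, hΦ.zero, hΦ.zero⟩, by simp [dot]⟩
  have hfe : W.filter (fun v => Nzd v)
      = ((vecΦ Φ).filter (fun x => dot a x = 0)).filter (fun v => Nzd v) := by
    ext v
    rw [hW, Finset.mem_filter, Finset.mem_filter, Finset.mem_erase]
    constructor
    · rintro ⟨⟨_, h2⟩, h3⟩; exact ⟨h2, h3⟩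
    · rintro ⟨h2, h3⟩; exact ⟨⟨h3.ne_zero, h2⟩, h3⟩
  rw [hfe] at hproj
  rw [← hproj, hWcard]

end geom

section geom2

variable [Fintype K] {p e q : ℕ} [Fact p.Prime] [CharP K p]

def Bf (q : ℕ) : Finset (V3 K) := Pts.filter (inΦ (Fq q))

def SPf (q : ℕ) : Finset (V3 K) := Pts \ Bf q

def lineP (a : V3 K) : Finset (V3 K) := Pts.filter (fun x => dot a x = 0)

def lineS (q : ℕ) (a : V3 K) : Finset (V3 K) := (lineP a).filter (fun x => x ∉ Bf q)

lemma mem_Bf {v : V3 K} : v ∈ Bf q ↔ Nzd v ∧ inΦ (Fq q) v := by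
  simp [Bf, mem_Pts, Finset.mem_filter]

lemma mem_SPf {v : V3 K} : v ∈ SPf q ↔ Nzd v ∧ ¬(v ∈ Bf q) := by
  simp [SPf, Finset.mem_sdiff, mem_Pts]

lemma mem_lineP {a v : V3 K} : v ∈ lineP a ↔ Nzd v ∧ dot a v = 0 := by
  simp [lineP, mem_Pts, Finset.mem_filter]

lemma mem_lineS {a v : V3 K} : v ∈ lineS q a ↔ (Nzd v ∧ dot a v = 0) ∧ v ∉ Bf q := by
  simp [lineS, mem_lineP, Finset.mem_filter]

variable (hq2 : 2 ≤ q) (hpe : q = p ^ e) (hcard : Fintype.card K = q ^ 2)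

include hq2 hpe hcard in
lemma card_Bf : (Bf (K := K) q).card = q ^ 2 + q + 1 := by
  classical
  have hFq : SubF (Fq (K := K) q) := SubF_Fq (by omega) hpe
  have hFqcard : (Fq (K := K) q).card = q := card_Fq hq2 hpe hcard
  set W : Finset (V3 K) := (vecΦ (Fq (K := K) q)).erase 0 with hW
  have h0 : (0 : V3 K) ∉ W := Finset.notMem_erase _ _
  have hcoords : ∀ v ∈ W, inΦ (Fq (K := K) q) v := by
    intro v hv
    rw [hW, Finset.mem_erase, mem_vecΦ] at hv
    exact hv.2
  have hstab : ∀ v ∈ W, ∀ c ∈ Fq (K := K) q, c ≠ 0 → sm c v ∈ W := by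
    intro v hv c hc hcne
    rw [hW, Finset.mem_erase, mem_vecΦ] at hv ⊢
    refine ⟨?_, sm_mem hFq hc hv.2⟩
    intro hcon
    rcases sm_eq_zero_iff.mp hcon with h | h
    · exact hcne h
    · exact hv.1 h
  have hproj := card_proj hFq h0 hcoords hstab
  have hWcard : W.card = q ^ 3 - 1 := by
    rw [hW, Finset.card_erase_of_mem, card_vecΦ, hFqcard]
    rw [mem_vecΦ]
    exact ⟨hFq.zero, hFq.zero, hFq.zero⟩
  have hfe : W.filter (fun v => Nzd v) = Bf q := by
    ext v
    rw [hW, Finset.mem_filter, Finset.mem_erase, mem_vecΦ, mem_Bf]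
    constructor
    · rintro ⟨⟨_, h2⟩, h3⟩; exact ⟨h3, h2⟩
    · rintro ⟨h2, h3⟩; exact ⟨⟨h2.ne_zero, h3⟩, h2⟩
  rw [hWcard, hfe, hFqcard] at hproj
  apply Nat.eq_of_mul_eq_mul_right (show 0 < q - 1 by omega)
  rw [← hproj, natid3 (by omega)]

include hq2 hcard in
lemma card_Pts' : (Pts : Finset (V3 K)).card = q ^ 4 + q ^ 2 + 1 := by
  have h := card_Pts K (m := q ^ 2) (by nlinarith) hcard
  rw [h]; ring_nf

include hq2 hcard in
lemma card_lineP {a : V3 K} (ha : a ≠ 0) : (lineP (K := K) a).card = q ^ 2 + 1 := by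
  classical
  have h := card_lineΦ (Φ := (Finset.univ : Finset K)) SubF.univ ha
    ⟨Finset.mem_univ _, Finset.mem_univ _, Finset.mem_univ _⟩
    (by rw [Finset.card_univ, hcard]; nlinarith)
  have huniv : (Finset.univ : Finset K).card = q ^ 2 := by rw [Finset.card_univ, hcard]
  have hfe : ((vecΦ (Finset.univ : Finset K)).filter (fun x => dot a x = 0)).filter
      (fun v => Nzd v) = lineP a := by
    ext v
    rw [Finset.mem_filter, Finset.mem_filter, mem_vecΦ, mem_lineP]
    constructor
    · rintro ⟨⟨_, h2⟩, h3⟩; exact ⟨h3, h2⟩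
    · rintro ⟨h2, h3⟩
      exact ⟨⟨⟨Finset.mem_univ _, Finset.mem_univ _, Finset.mem_univ _⟩, h3⟩, h2⟩
  rw [hfe, huniv] at h
  have hq4 : (q ^ 2) ^ 2 - 1 = (q ^ 2 + 1) * (q ^ 2 - 1) := (natid2 (by nlinarith)).symm
  rw [hq4] at h
  exact Nat.eq_of_mul_eq_mul_right (Nat.sub_pos_of_lt (by nlinarith)) h

/-- two distinct projective points lie on at most one projective line -/
lemma eq_of_double_dot {a b x y : V3 K} (ha : Nzd a) (hb : Nzd b) (hx : Nzd x) (hy : Nzd y)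
    (hxy : x ≠ y) (h1 : dot a x = 0) (h2 : dot a y = 0) (h3 : dot b x = 0) (h4 : dot b y = 0) :
    a = b := by
  have hcxy : cross x y ≠ 0 := by
    intro h
    obtain ⟨c, hc⟩ := cross_eq_zero_imp hx.ne_zero h
    exact hxy (Nzd_eq_of_sm hx hy hc).symm
  have hpar : ∀ z : V3 K, Nzd z → dot z x = 0 → dot z y = 0 → z = norm3 (cross x y) := by
    intro z hz hzx hzy
    have hz0 : cross z (cross x y) = 0 := by
      rw [cross_cross, hzx, hzy, sm_zero_left, sm_zero_left, sub_zero]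
    have hz1 : cross (cross x y) z = 0 := by
      rw [cross_anticomm, hz0, neg_zero]
    obtain ⟨c, hc⟩ := cross_eq_zero_imp hcxy hz1
    have hcne : c ≠ 0 := by
      rintro rfl
      rw [sm_zero_left] at hc
      exact hz.ne_zero hc
    calc z = norm3 z := (norm3_of_Nzd hz).symm
    _ = norm3 (sm c (cross x y)) := by rw [← hc]
    _ = norm3 (cross x y) := norm3_sm hcne hcxy
  rw [hpar a ha h1 h2, hpar b hb h3 h4]

lemma cross_inΦ {Φ : Finset K} (hΦ : SubF Φ) {v w : V3 K} (hv : inΦ Φ v) (hw : inΦ Φ w) :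
    inΦ Φ (cross v w) := by
  obtain ⟨a1, a2, a3⟩ := hv
  obtain ⟨b1, b2, b3⟩ := hw
  exact ⟨hΦ.sub (hΦ.mul _ a2 _ b3) (hΦ.mul _ a3 _ b2),
         hΦ.sub (hΦ.mul _ a3 _ b1) (hΦ.mul _ a1 _ b3),
         hΦ.sub (hΦ.mul _ a1 _ b2) (hΦ.mul _ a2 _ b1)⟩

lemma norm3_inΦ {Φ : Finset K} (hΦ : SubF Φ) {v : V3 K} (hv : v ≠ 0) (h : inΦ Φ v) :
    inΦ Φ (norm3 v) := by
  obtain ⟨c, hcc, hcne, hveq⟩ := sm_norm3 hv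
  have hcΦ : c ∈ Φ := by
    rcases hcc with h1 | h1 | h1 <;> rw [h1]
    · exact h.1
    · exact h.2.1
    · exact h.2.2
  have heq : sm c⁻¹ v = norm3 v := by
    conv_lhs => rw [hveq]
    rw [sm_sm, inv_mul_cancel₀ hcne, sm_one]
  rw [← heq]
  exact sm_mem hΦ (hΦ.inv _ hcΦ) h

include hq2 hpe hcard in
lemma exists_B_on_line {a : V3 K} (ha : a ≠ 0) : ∃ z, z ∈ Bf (K := K) q ∧ dot a z = 0 := by
  classical
  have hFq : SubF (Fq (K := K) q) := SubF_Fq (by omega) hpe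
  have hFqcard : (Fq (K := K) q).card = q := card_Fq hq2 hpe hcard
  have hlt : (Finset.univ : Finset K).card < (vecΦ (Fq (K := K) q)).card := by
    rw [Finset.card_univ, hcard, card_vecΦ, hFqcard]
    nlinarith
  obtain ⟨u, _, w, _, huw, heq⟩ :=
    Finset.exists_ne_map_eq_of_card_lt_of_maps_to hlt
      (fun (x : V3 K) _ => Finset.mem_univ (dot a x))
  set v : V3 K := u - w with hv
  have hvne : v ≠ 0 := by
    rw [hv, sub_ne_zero]; exact huw
  have hvΦ : inΦ (Fq (K := K) q) v := by
    rw [hv]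
    exact sub_mem3 hFq (mem_vecΦ.mp (by assumption)) (mem_vecΦ.mp (by assumption))
  have hdv : dot a v = 0 := by
    rw [hv, dot_sub_right, heq, sub_self]
  refine ⟨norm3 v, mem_Bf.mpr ⟨Nzd_norm3 hvne, norm3_inΦ hFq hvne hvΦ⟩, ?_⟩
  obtain ⟨c, _, hcne, hveq⟩ := sm_norm3 hvne
  have heq2 : sm c⁻¹ v = norm3 v := by
    conv_lhs => rw [hveq]
    rw [sm_sm, inv_mul_cancel₀ hcne, sm_one]
  rw [← heq2, dot_sm_right, hdv, mul_zero]

include hpe in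
lemma B_unique {a : V3 K} (haS : a ∈ SPf (K := K) q) (hq0 : q ≠ 0) :
    ∀ z w : V3 K, z ∈ Bf q → dot a z = 0 → w ∈ Bf q → dot a w = 0 → z = w := by
  intro z w hz hdz hw hdw
  by_contra hzw
  have hFq : SubF (Fq (K := K) q) := SubF_Fq hq0 hpe
  rw [mem_SPf] at haS
  rw [mem_Bf] at hz hw
  have hczw : cross z w ≠ 0 := by
    intro h
    obtain ⟨c, hc⟩ := cross_eq_zero_imp hz.1.ne_zero h
    exact hzw (Nzd_eq_of_sm hz.1 hw.1 hc).symm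
  have hz0 : cross a (cross z w) = 0 := by
    rw [cross_cross, hdz, hdw, sm_zero_left, sm_zero_left, sub_zero]
  have hz1 : cross (cross z w) a = 0 := by
    rw [cross_anticomm, hz0, neg_zero]
  obtain ⟨c, hc⟩ := cross_eq_zero_imp hczw hz1
  have hcne : c ≠ 0 := by
    rintro rfl
    rw [sm_zero_left] at hc
    exact haS.1.ne_zero hc
  have : a = norm3 (cross z w) := by
    calc a = norm3 a := (norm3_of_Nzd haS.1).symm
    _ = norm3 (sm c (cross z w)) := by rw [← hc]
    _ = norm3 (cross z w) := norm3_sm hcne hczw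
  apply haS.2
  rw [mem_Bf, this]
  exact ⟨Nzd_norm3 hczw, norm3_inΦ hFq hczw (cross_inΦ hFq hz.2 hw.2)⟩

noncomputable def tangd (q : ℕ) (a : V3 K) : V3 K :=
  if h : ∃ z, z ∈ Bf (K := K) q ∧ dot a z = 0 then h.choose else 0

include hq2 hpe hcard in
lemma tangd_spec {a : V3 K} (haS : a ∈ SPf (K := K) q) :
    tangd q a ∈ Bf (K := K) q ∧ dot a (tangd q a) = 0 := by
  have ha : a ≠ 0 := (mem_SPf.mp haS).1.ne_zero
  have h := exists_B_on_line hq2 hpe hcard ha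
  rw [tangd, dif_pos h]
  exact h.choose_spec

include hq2 hpe hcard in
lemma tangd_eq {a : V3 K} (haS : a ∈ SPf (K := K) q) {z : V3 K}
    (hz : z ∈ Bf q) (hdz : dot a z = 0) : tangd q a = z := by
  have hs := tangd_spec hq2 hpe hcard haS
  exact B_unique hpe haS (by omega) _ _ hs.1 hs.2 hz hdz

include hq2 hpe hcard in
lemma card_lineS {a : V3 K} (haS : a ∈ SPf (K := K) q) : (lineS q a).card = q ^ 2 := by
  classical
  have ha : a ≠ 0 := (mem_SPf.mp haS).1.ne_zero
  have hsplit := Finset.card_filter_add_card_filter_not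
    (s := lineP (K := K) a) (p := fun x => x ∈ Bf q)
  have hBpart : (lineP (K := K) a).filter (fun x => x ∈ Bf q) = {tangd q a} := by
    ext z
    rw [Finset.mem_filter, mem_lineP, Finset.mem_singleton]
    constructor
    · rintro ⟨⟨_, h2⟩, h3⟩
      exact (tangd_eq hq2 hpe hcard haS h3 h2).symm
    · rintro rfl
      have hs := tangd_spec hq2 hpe hcard haS
      exact ⟨⟨(mem_Bf.mp hs.1).1, hs.2⟩, hs.1⟩
  have : (lineS q a) = (lineP (K := K) a).filter (fun x => ¬(x ∈ Bf q)) := rfl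
  rw [this]
  have hc := card_lineP hq2 hcard ha
  rw [hBpart, Finset.card_singleton] at hsplit
  omega

end geom2

section geom3

variable [Fintype K] {p e q : ℕ} [Fact p.Prime] [CharP K p]

variable (hq2 : 2 ≤ q) (hpe : q = p ^ e) (hcard : Fintype.card K = q ^ 2)

include hq2 hpe hcard in
lemma card_SPf : (SPf (K := K) q).card = q ^ 4 - q := by
  have h1 : Bf (K := K) q ⊆ Pts := Finset.filter_subset _ _
  have h2 : (SPf (K := K) q).card = Pts.card - (Bf (K := K) q).card :=
    Finset.card_sdiff_of_subset h1
  rw [h2, card_Pts' hq2 hcard, card_Bf hq2 hpe hcard]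
  have h3 : q ≤ q ^ 4 := Nat.le_self_pow (by omega) q
  omega

include hq2 hpe hcard in
lemma lineS_inj {a b : V3 K} (ha : a ∈ SPf (K := K) q) (hb : b ∈ SPf (K := K) q)
    (h : lineS q a = lineS q b) : a = b := by
  have hcS : (lineS (K := K) q a).card = q ^ 2 := card_lineS hq2 hpe hcard ha
  have h2 : 1 < (lineS (K := K) q a).card := by
    rw [hcS]; nlinarith
  obtain ⟨x, hx, y, hy, hxy⟩ := Finset.one_lt_card.mp h2
  have hx' := mem_lineS.mp hx
  have hy' := mem_lineS.mp hy
  have hxb := mem_lineS.mp (h ▸ hx)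
  have hyb := mem_lineS.mp (h ▸ hy)
  exact eq_of_double_dot (mem_SPf.mp ha).1 (mem_SPf.mp hb).1 hx'.1.1 hy'.1.1 hxy
    hx'.1.2 hy'.1.2 hxb.1.2 hyb.1.2

lemma lineS_inter_subsingleton {a b : V3 K} (ha : a ∈ SPf (K := K) q)
    (hb : b ∈ SPf (K := K) q) (hab : a ≠ b) :
    ∀ x ∈ lineS q a ∩ lineS q b, ∀ y ∈ lineS q a ∩ lineS q b, x = y := by
  intro x hx y hy
  rw [Finset.mem_inter] at hx hy
  have hxa := mem_lineS.mp hx.1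
  have hxb := mem_lineS.mp hx.2
  have hya := mem_lineS.mp hy.1
  have hyb := mem_lineS.mp hy.2
  exact eq_of_double_dot hxa.1.1 hya.1.1 (mem_SPf.mp ha).1 (mem_SPf.mp hb).1 hab
    (by rw [dot_comm]; exact hxa.1.2) (by rw [dot_comm]; exact hxb.1.2)
    (by rw [dot_comm]; exact hya.1.2) (by rw [dot_comm]; exact hyb.1.2)

lemma cross_SPf_ne_zero {a b : V3 K} (ha : a ∈ SPf (K := K) q) (hb : b ∈ SPf (K := K) q)
    (hab : a ≠ b) : cross a b ≠ 0 := by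
  intro h
  obtain ⟨c, hc⟩ := cross_eq_zero_imp (mem_SPf.mp ha).1.ne_zero h
  exact hab (Nzd_eq_of_sm (mem_SPf.mp ha).1 (mem_SPf.mp hb).1 hc).symm

include hq2 hpe hcard in
lemma parallel_iff {a b : V3 K} (ha : a ∈ SPf (K := K) q) (hb : b ∈ SPf (K := K) q)
    (hab : a ≠ b) : (lineS q a ∩ lineS q b = ∅) ↔ tangd q a = tangd q b := by
  constructor
  · intro hdis
    have hcab : cross a b ≠ 0 := cross_SPf_ne_zero ha hb hab
    set z : V3 K := norm3 (cross a b) with hz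
    have hzn : Nzd z := Nzd_norm3 hcab
    obtain ⟨c, _, hcne, hveq⟩ := sm_norm3 hcab
    have heq2 : sm c⁻¹ (cross a b) = z := by
      rw [hz]
      conv_lhs => rw [hveq]
      rw [sm_sm, inv_mul_cancel₀ hcne, sm_one]
    have hdza : dot a z = 0 := by
      rw [← heq2, dot_sm_right, dot_comm, cross_dot_left, mul_zero]
    have hdzb : dot b z = 0 := by
      rw [← heq2, dot_sm_right, dot_comm, cross_dot_right, mul_zero]
    by_cases hzB : z ∈ Bf q
    · rw [tangd_eq hq2 hpe hcard ha hzB hdza, tangd_eq hq2 hpe hcard hb hzB hdzb]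
    · exfalso
      have : z ∈ lineS q a ∩ lineS q b := by
        rw [Finset.mem_inter, mem_lineS, mem_lineS]
        exact ⟨⟨⟨hzn, hdza⟩, hzB⟩, ⟨⟨hzn, hdzb⟩, hzB⟩⟩
      rw [hdis] at this
      exact absurd this (Finset.notMem_empty z)
  · intro htang
    rw [Finset.eq_empty_iff_forall_notMem]
    intro x hx
    rw [Finset.mem_inter, mem_lineS, mem_lineS] at hx
    have hta := tangd_spec hq2 hpe hcard ha
    have htb := tangd_spec hq2 hpe hcard hb
    have hxt : x ≠ tangd q a := by
      intro hc
      exact hx.1.2 (hc ▸ hta.1)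
    have hdbt : dot b (tangd q a) = 0 := by rw [htang]; exact htb.2
    exact hab (eq_of_double_dot (mem_SPf.mp ha).1 (mem_SPf.mp hb).1 hx.1.1.1
      (mem_Bf.mp hta.1).1 hxt hx.1.1.2 hta.2 hx.2.1.2 hdbt)

include hq2 hpe hcard in
lemma exists_tangent_at {P : V3 K} (hP : P ∈ Bf (K := K) q) :
    ∃ a, a ∈ SPf (K := K) q ∧ dot a P = 0 := by
  classical
  have hFq : SubF (Fq (K := K) q) := SubF_Fq (by omega) hpe
  have hFqcard : (Fq (K := K) q).card = q := card_Fq hq2 hpe hcard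
  have hPm := mem_Bf.mp hP
  have hPne : P ≠ 0 := hPm.1.ne_zero
  -- all duals through P
  set DAll : Finset (V3 K) := Pts.filter (fun a => dot a P = 0) with hDAll
  have hDAlleq : DAll = lineP P := by
    ext a
    rw [hDAll, Finset.mem_filter, mem_lineP, mem_Pts, dot_comm]
  have hDAllcard : DAll.card = q ^ 2 + 1 := by
    rw [hDAlleq]; exact card_lineP hq2 hcard hPne
  -- rational duals through P
  set DF : Finset (V3 K) := (Bf q).filter (fun a => dot a P = 0) with hDF
  have hDFcard : DF.card = q + 1 := by
    have h := card_lineΦ (Φ := Fq (K := K) q) hFq hPne hPm.2 (by rw [hFqcard]; exact hq2)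
    have hfe : ((vecΦ (Fq (K := K) q)).filter (fun x => dot P x = 0)).filter
        (fun v => Nzd v) = DF := by
      ext a
      rw [Finset.mem_filter, Finset.mem_filter, mem_vecΦ, hDF, Finset.mem_filter, mem_Bf,
        dot_comm]
      constructor
      · rintro ⟨⟨h1, h2⟩, h3⟩; exact ⟨⟨h3, h1⟩, h2⟩
      · rintro ⟨⟨h1, h2⟩, h3⟩; exact ⟨⟨h2, h3⟩, h1⟩
    rw [hfe, hFqcard] at h
    have hq4 : q ^ 2 - 1 = (q + 1) * (q - 1) := (natid2 (by omega)).symm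
    rw [hq4] at h
    exact Nat.eq_of_mul_eq_mul_right (by omega) h
  have hsub : DF ⊆ DAll := by
    intro a haa
    rw [hDF, Finset.mem_filter, mem_Bf] at haa
    rw [hDAll, Finset.mem_filter, mem_Pts]
    exact ⟨haa.1.1, haa.2⟩
  have hlt : DF.card < DAll.card := by
    rw [hDFcard, hDAllcard]; nlinarith
  obtain ⟨a, haAll, haDF⟩ := Finset.exists_of_ssubset (Finset.ssubset_iff_of_subset hsub |>.mpr
    (by
      by_contra hcon
      push_neg at hcon
      have : DAll ⊆ DF := hcon
      have := Finset.card_le_card this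
      omega))
  rw [hDAll, Finset.mem_filter, mem_Pts] at haAll
  refine ⟨a, mem_SPf.mpr ⟨haAll.1, ?_⟩, haAll.2⟩
  intro haB
  exact haDF (by rw [hDF, Finset.mem_filter]; exact ⟨haB, haAll.2⟩)

noncomputable def tl (q : ℕ) (P : V3 K) : V3 K :=
  if h : ∃ a, a ∈ SPf (K := K) q ∧ dot a P = 0 then h.choose else 0

include hq2 hpe hcard in
lemma tl_spec {P : V3 K} (hP : P ∈ Bf (K := K) q) :
    tl q P ∈ SPf (K := K) q ∧ tangd q (tl q P) = P := by
  have h := exists_tangent_at hq2 hpe hcard hP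
  rw [tl, dif_pos h]
  refine ⟨h.choose_spec.1, ?_⟩
  exact tangd_eq hq2 hpe hcard h.choose_spec.1 hP h.choose_spec.2

end geom3

section abstract

lemma no_completion {β : Type} [DecidableEq β] (n : ℕ) (hn : 2 ≤ n)
    (S : Finset β) (A : Finset (Finset β)) (hS : S.card = n ^ 2)
    (T : Finset β) (ℓ : β → Finset β)
    (hTA : ∀ P ∈ T, ℓ P ∈ A)
    (hTsep : ∀ P ∈ T, ∀ Q ∈ T, P ≠ Q → ℓ P ≠ ℓ Q ∧ (ℓ P ∩ ℓ Q).Nonempty)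
    (hT : n + 1 < T.card) :
    ¬ ∃ A' : Finset (Finset β), A ⊆ A' ∧ (∀ L ∈ A', L ⊆ S ∧ L.card = n) ∧
      ∀ P ∈ S, ∀ Q ∈ S, P ≠ Q → ∃! L, L ∈ A' ∧ P ∈ L ∧ Q ∈ L := by
  rintro ⟨A', hAA', hA'l, hcov⟩
  classical
  -- every point of S lies on exactly n+1 lines of A'
  have key1 : ∀ x ∈ S, (A'.filter (fun L => x ∈ L)).card = n + 1 := by
    intro x hx
    set E := A'.filter (fun L => x ∈ L) with hE
    have hdisj : ∀ L ∈ E, ∀ M ∈ E, L ≠ M → Disjoint (L.erase x) (M.erase x) := by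
      intro L hL M hM hLM
      rw [Finset.disjoint_left]
      intro y hyL hyM
      rw [Finset.mem_erase] at hyL hyM
      have hLmem := Finset.mem_filter.mp hL
      have hMmem := Finset.mem_filter.mp hM
      have hyS : y ∈ S := (hA'l L hLmem.1).1 hyL.2
      have huniq := hcov x hx y hyS (fun hc => hyL.1 hc.symm)
      exact hLM ((huniq.unique ⟨hLmem.1, hLmem.2, hyL.2⟩ ⟨hMmem.1, hMmem.2, hyM.2⟩))
    have hbU : E.biUnion (fun L => L.erase x) = S.erase x := by
      ext y
      rw [Finset.mem_biUnion, Finset.mem_erase]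
      constructor
      · rintro ⟨L, hL, hyL⟩
        rw [Finset.mem_erase] at hyL
        have hLmem := Finset.mem_filter.mp hL
        exact ⟨hyL.1, (hA'l L hLmem.1).1 hyL.2⟩
      · rintro ⟨hyx, hyS⟩
        obtain ⟨L, hL⟩ := (hcov x hx y hyS (fun hc => hyx hc.symm)).exists
        exact ⟨L, Finset.mem_filter.mpr ⟨hL.1, hL.2.1⟩, Finset.mem_erase.mpr ⟨hyx, hL.2.2⟩⟩
    have hcount : E.card * (n - 1) = n ^ 2 - 1 := by
      have h1 := Finset.card_biUnion hdisj
      rw [hbU, Finset.card_erase_of_mem hx, hS] at h1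
      have h2 : ∀ L ∈ E, (L.erase x).card = n - 1 := by
        intro L hL
        have hLmem := Finset.mem_filter.mp hL
        rw [Finset.card_erase_of_mem hLmem.2, (hA'l L hLmem.1).2]
      rw [Finset.sum_congr rfl h2, Finset.sum_const, smul_eq_mul] at h1
      omega
    have hfact : (n + 1) * (n - 1) = n ^ 2 - 1 := natid2 (by omega)
    have : E.card * (n - 1) = (n + 1) * (n - 1) := by rw [hcount, hfact]
    exact Nat.eq_of_mul_eq_mul_right (by omega) this
  -- Playfair: through a point off a line there is a unique disjoint line
  have key2 : ∀ L ∈ A', ∀ x ∈ S, x ∉ L → ∃! M, M ∈ A' ∧ x ∈ M ∧ L ∩ M = ∅ := by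
    intro L hL x hx hxL
    set E := A'.filter (fun M => x ∈ M) with hE
    have hEcard : E.card = n + 1 := key1 x hx
    set f : β → Finset β :=
      fun y => if h : ∃! M, M ∈ A' ∧ x ∈ M ∧ y ∈ M then h.exists.choose else ∅ with hf
    have hcovxy : ∀ y ∈ L, ∃! M, M ∈ A' ∧ x ∈ M ∧ y ∈ M := by
      intro y hy
      exact hcov x hx y ((hA'l L hL).1 hy) (fun hc => hxL (hc ▸ hy))
    have hfspec : ∀ y ∈ L, f y ∈ A' ∧ x ∈ f y ∧ y ∈ f y := by
      intro y hy
      have h := hcovxy y hy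
      rw [hf]
      simp only [dif_pos h]
      exact h.exists.choose_spec
    have hfuniq : ∀ y ∈ L, ∀ M, M ∈ A' → x ∈ M → y ∈ M → M = f y := by
      intro y hy M h1 h2 h3
      have h := hcovxy y hy
      exact h.unique ⟨h1, h2, h3⟩ ⟨(hfspec y hy).1, (hfspec y hy).2.1, (hfspec y hy).2.2⟩
    have him : E.filter (fun M => (L ∩ M).Nonempty) = L.image f := by
      ext M
      rw [Finset.mem_filter, Finset.mem_image]
      constructor
      · rintro ⟨hME, ⟨z, hz⟩⟩
        rw [Finset.mem_inter] at hz
        rw [hE, Finset.mem_filter] at hME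
        exact ⟨z, hz.1, (hfuniq z hz.1 M hME.1 hME.2 hz.2).symm⟩
      · rintro ⟨y, hy, rfl⟩
        obtain ⟨h1, h2, h3⟩ := hfspec y hy
        rw [hE, Finset.mem_filter]
        exact ⟨⟨h1, h2⟩, ⟨y, Finset.mem_inter.mpr ⟨hy, h3⟩⟩⟩
    have hinj : Set.InjOn f L := by
      intro y1 hy1 y2 hy2 hfeq
      by_contra hne
      have h1 := hfspec y1 hy1
      have h2 := hfspec y2 hy2
      have hy2f : y2 ∈ f y1 := by rw [hfeq]; exact h2.2.2
      have hy1S : (y1 : β) ∈ S := (hA'l L hL).1 hy1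
      have hy2S : (y2 : β) ∈ S := (hA'l L hL).1 hy2
      have huniq := hcov y1 hy1S y2 hy2S hne
      have : L = f y1 := huniq.unique ⟨hL, hy1, hy2⟩ ⟨h1.1, h1.2.2, hy2f⟩
      exact hxL (this ▸ h1.2.1)
    have hEmcard : (E.filter (fun M => (L ∩ M).Nonempty)).card = n := by
      rw [him, Finset.card_image_of_injOn hinj, (hA'l L hL).2]
    have hsplit := Finset.card_filter_add_card_filter_not
      (s := E) (p := fun M => (L ∩ M).Nonempty)
    have hone : (E.filter (fun M => ¬(L ∩ M).Nonempty)).card = 1 := by omega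
    obtain ⟨M₀, hM₀⟩ := Finset.card_eq_one.mp hone
    have hM₀mem : M₀ ∈ E.filter (fun M => ¬(L ∩ M).Nonempty) := by
      rw [hM₀]; exact Finset.mem_singleton_self _
    rw [Finset.mem_filter, hE, Finset.mem_filter] at hM₀mem
    refine ⟨M₀, ⟨hM₀mem.1.1, hM₀mem.1.2, Finset.not_nonempty_iff_eq_empty.mp hM₀mem.2⟩, ?_⟩
    rintro M ⟨h1, h2, h3⟩
    have : M ∈ E.filter (fun M => ¬(L ∩ M).Nonempty) := by
      rw [Finset.mem_filter, hE, Finset.mem_filter]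
      exact ⟨⟨h1, h2⟩, by rw [h3]; exact Finset.not_nonempty_empty⟩
    rw [hM₀] at this
    exact Finset.mem_singleton.mp this
  -- pigeonhole
  have hSne : S.Nonempty := Finset.card_pos.mp (by rw [hS]; positivity)
  obtain ⟨x₀, hx₀⟩ := hSne
  set E₀ := A'.filter (fun L => x₀ ∈ L) with hE₀
  have hE₀card : E₀.card = n + 1 := key1 x₀ hx₀
  set Ψ : β → Finset β := fun P =>
    if x₀ ∈ ℓ P then ℓ P
    else (if h : ∃! M, M ∈ A' ∧ x₀ ∈ M ∧ (ℓ P) ∩ M = ∅ then h.exists.choose else ∅) with hΨ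
  have hΨspec : ∀ P ∈ T, Ψ P ∈ E₀ ∧ (Ψ P = ℓ P ∨ ℓ P ∩ Ψ P = ∅) := by
    intro P hP
    have hℓA' : ℓ P ∈ A' := hAA' (hTA P hP)
    by_cases hxm : x₀ ∈ ℓ P
    · rw [hΨ]
      simp only [if_pos hxm]
      exact ⟨Finset.mem_filter.mpr ⟨hℓA', hxm⟩, by left; trivial⟩
    · have h := key2 (ℓ P) hℓA' x₀ hx₀ hxm
      rw [hΨ]
      simp only [if_neg hxm, dif_pos h]
      obtain ⟨h1, h2, h3⟩ := h.exists.choose_spec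
      exact ⟨Finset.mem_filter.mpr ⟨h1, h2⟩, Or.inr h3⟩
  obtain ⟨P, hP, Q, hQ, hPQ, hψ⟩ :=
    Finset.exists_ne_map_eq_of_card_lt_of_maps_to
      (by rw [hE₀card]; exact hT) (fun P hP => (hΨspec P hP).1)
  obtain ⟨hsep1, hsep2⟩ := hTsep P hP Q hQ hPQ
  obtain ⟨z, hz⟩ := hsep2
  rw [Finset.mem_inter] at hz
  rcases (hΨspec P hP).2 with hP1 | hP2 <;> rcases (hΨspec Q hQ).2 with hQ1 | hQ2
  · exact hsep1 (by rw [← hP1, ← hQ1, hψ])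
  · -- Ψ P = ℓ P and ℓ Q ∩ Ψ Q = ∅
    rw [← hψ, hP1] at hQ2
    have : z ∈ ℓ Q ∩ ℓ P := Finset.mem_inter.mpr ⟨hz.2, hz.1⟩
    rw [hQ2] at this
    exact Finset.notMem_empty z this
  · rw [hψ, hQ1] at hP2
    have : z ∈ ℓ P ∩ ℓ Q := Finset.mem_inter.mpr ⟨hz.1, hz.2⟩
    rw [hP2] at this
    exact Finset.notMem_empty z this
  · rw [← hψ] at hQ2
    have hzS : z ∈ S := (hA'l (ℓ P) (hAA' (hTA P hP))).1 hz.1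
    have hzM : z ∉ Ψ P := by
      intro hc
      have : z ∈ ℓ P ∩ Ψ P := Finset.mem_inter.mpr ⟨hz.1, hc⟩
      rw [hP2] at this
      exact Finset.notMem_empty z this
    have hMA' : Ψ P ∈ A' := (Finset.mem_filter.mp (hΨspec P hP).1).1
    have huniq := key2 (Ψ P) hMA' z hzS hzM
    have e1 := huniq.unique
      ⟨hAA' (hTA P hP), hz.1, by rw [Finset.inter_comm]; exact hP2⟩
      ⟨hAA' (hTA Q hQ), hz.2, by rw [Finset.inter_comm]; exact hQ2⟩
    exact hsep1 e1

end abstract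

section final

variable [Fintype K] {p e q : ℕ} [Fact p.Prime] [CharP K p]
variable (hq2 : 2 ≤ q) (hpe : q = p ^ e) (hcard : Fintype.card K = q ^ 2)

include hq2 hpe hcard in
lemma sim_iff {a b : V3 K} (ha : a ∈ SPf (K := K) q) (hb : b ∈ SPf (K := K) q) :
    (lineS q a = lineS q b ∨ lineS q a ∩ lineS q b = ∅) ↔ tangd q a = tangd q b := by
  constructor
  · rintro (h | h)
    · rw [lineS_inj hq2 hpe hcard ha hb h]
    · have hab : a ≠ b := by
        rintro rfl
        have hc := card_lineS hq2 hpe hcard ha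
        rw [Finset.inter_self] at h
        rw [h, Finset.card_empty] at hc
        nlinarith
      exact (parallel_iff hq2 hpe hcard ha hb hab).mp h
  · intro h
    by_cases hab : a = b
    · exact Or.inl (by rw [hab])
    · exact Or.inr ((parallel_iff hq2 hpe hcard ha hb hab).mpr h)

end final

open scoped Classical in
theorem stmt_14' (q : ℕ) (hq : IsPrimePow q) :
    ∃ (β : Type) (_ : DecidableEq β) (S : Finset β) (A : Finset (Finset β)),
      S.card = (q ^ 2) ^ 2 ∧
      (∀ L ∈ A, L ⊆ S ∧ L.card = q ^ 2) ∧
      (∀ L ∈ A, ∀ M ∈ A, L ≠ M → (L ∩ M).card ≤ 1) ∧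
      A.card = q ^ 4 - q ∧
      Equivalence (fun (L M : {x // x ∈ A}) => L.1 = M.1 ∨ L.1 ∩ M.1 = ∅) ∧
      ¬ ∃ A' : Finset (Finset β), A ⊆ A' ∧ (∀ L ∈ A', L ⊆ S ∧ L.card = q ^ 2) ∧
        ∀ P ∈ S, ∀ Q ∈ S, P ≠ Q → ∃! L, L ∈ A' ∧ P ∈ L ∧ Q ∈ L := by
  obtain ⟨p, e, hpp, he, hpeq⟩ := hq
  have hp : p.Prime := Nat.prime_iff.mpr hpp
  haveI : Fact p.Prime := ⟨hp⟩
  have hpe : q = p ^ e := hpeq.symm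
  have hq2 : 2 ≤ q := by
    rw [hpe]
    calc 2 = 2 ^ 1 := by norm_num
    _ ≤ p ^ e := Nat.pow_le_pow_left hp.two_le e |>.trans' (by
        exact Nat.pow_le_pow_right (by omega) he)
  set K := GaloisField p (2 * e) with hK
  haveI : Fintype K := Fintype.ofFinite K
  haveI : DecidableEq K := Classical.decEq K
  have hcard : Fintype.card K = q ^ 2 := by
    have h1 := GaloisField.card p (2 * e) (by omega)
    rw [Nat.card_eq_fintype_card] at h1
    show Fintype.card (GaloisField p (2 * e)) = q ^ 2
    rw [h1, hpe, ← pow_mul, mul_comm 2 e]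
  -- the ambient type with q extra isolated points
  set β : Type := V3 K ⊕ Fin q with hβ
  haveI : DecidableEq β := Classical.decEq β
  have hinl : Function.Injective (Sum.inl : V3 K → β) := Sum.inl_injective
  set S : Finset β := (SPf (K := K) q).image Sum.inl ∪
    Finset.univ.image (Sum.inr : Fin q → β) with hS
  set A : Finset (Finset β) :=
    (SPf (K := K) q).image (fun a => (lineS q a).image Sum.inl) with hA
  refine ⟨β, inferInstance, S, A, ?_, ?_, ?_, ?_, ?_, ?_⟩
  -- 1. S.card
  · have hdisj : Disjoint ((SPf (K := K) q).image Sum.inl)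
        (Finset.univ.image (Sum.inr : Fin q → β)) := by
      rw [Finset.disjoint_left]
      rintro z hz1 hz2
      rw [Finset.mem_image] at hz1 hz2
      obtain ⟨v, _, rfl⟩ := hz1
      obtain ⟨i, _, hi⟩ := hz2
      exact Sum.inl_ne_inr hi.symm
    rw [hS, Finset.card_union_of_disjoint hdisj, Finset.card_image_of_injective _ hinl,
      Finset.card_image_of_injective _ Sum.inr_injective, card_SPf hq2 hpe hcard,
      Finset.card_univ, Fintype.card_fin]
    have h3 : q ≤ q ^ 4 := Nat.le_self_pow (by omega) q
    have h4 : (q ^ 2) ^ 2 = q ^ 4 := by ring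
    omega
  -- 2. lines
  · rintro L hL
    rw [hA, Finset.mem_image] at hL
    obtain ⟨a, haS, rfl⟩ := hL
    constructor
    · intro z hz
      rw [Finset.mem_image] at hz
      obtain ⟨x, hx, rfl⟩ := hz
      rw [hS, Finset.mem_union]
      left
      rw [Finset.mem_image]
      refine ⟨x, ?_, rfl⟩
      rw [mem_lineS] at hx
      exact mem_SPf.mpr ⟨hx.1.1, hx.2⟩
    · rw [Finset.card_image_of_injective _ hinl]
      exact card_lineS hq2 hpe hcard haS
  -- 3. pairwise intersections
  · rintro L hL M hM hLM
    rw [hA, Finset.mem_image] at hL hM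
    obtain ⟨a, haS, rfl⟩ := hL
    obtain ⟨b, hbS, rfl⟩ := hM
    have hab : a ≠ b := by rintro rfl; exact hLM rfl
    rw [← Finset.image_inter _ _ hinl]
    rw [Finset.card_image_of_injective _ hinl]
    rw [Finset.card_le_one]
    exact fun x hx y hy => lineS_inter_subsingleton haS hbS hab x hx y hy
  -- 4. A.card
  · rw [hA, Finset.card_image_of_injOn, card_SPf hq2 hpe hcard]
    intro a haS b hbS h
    exact lineS_inj hq2 hpe hcard haS hbS (Finset.image_injective hinl h)
  -- 5. equivalence
  · have hrep : ∀ L : {x // x ∈ A}, ∃ a, a ∈ SPf (K := K) q ∧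
        L.1 = (lineS q a).image Sum.inl := by
      rintro ⟨L, hL⟩
      rw [hA, Finset.mem_image] at hL
      obtain ⟨a, haS, rfl⟩ := hL
      exact ⟨a, haS, rfl⟩
    have htrans : ∀ {s t : Finset (V3 K)},
        ((s.image Sum.inl : Finset β) = t.image Sum.inl ∨
          (s.image Sum.inl : Finset β) ∩ t.image Sum.inl = ∅) ↔ (s = t ∨ s ∩ t = ∅) := by
      intro s t
      rw [← Finset.image_inter _ _ hinl]
      constructor
      · rintro (h | h)
        · exact Or.inl (Finset.image_injective hinl h)
        · exact Or.inr (by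
            have := Finset.image_injective hinl (f := Sum.inl)
            rw [← Finset.image_empty (Sum.inl : V3 K → β)] at h
            exact this h)
      · rintro (h | h)
        · exact Or.inl (by rw [h])
        · exact Or.inr (by rw [h, Finset.image_empty])
    constructor
    · intro L
      exact Or.inl rfl
    · rintro L M (h | h)
      · exact Or.inl h.symm
      · exact Or.inr (by rw [Finset.inter_comm]; exact h)
    · rintro L M N hLM hMN
      obtain ⟨a, haS, ha⟩ := hrep L
      obtain ⟨b, hbS, hb⟩ := hrep M
      obtain ⟨c, hcS, hc⟩ := hrep N
      rw [ha, hb] at hLM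
      rw [hb, hc] at hMN
      rw [ha, hc]
      rw [htrans] at hLM hMN ⊢
      rw [sim_iff hq2 hpe hcard haS hcS]
      rw [sim_iff hq2 hpe hcard haS hbS] at hLM
      rw [sim_iff hq2 hpe hcard hbS hcS] at hMN
      rw [hLM, hMN]
  -- 6. no completion
  · have hq2n : 2 ≤ q ^ 2 := by nlinarith
    have hScard : S.card = (q ^ 2) ^ 2 := by
      have hdisj : Disjoint ((SPf (K := K) q).image Sum.inl)
          (Finset.univ.image (Sum.inr : Fin q → β)) := by
        rw [Finset.disjoint_left]
        rintro z hz1 hz2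
        rw [Finset.mem_image] at hz1 hz2
        obtain ⟨v, _, rfl⟩ := hz1
        obtain ⟨i, _, hi⟩ := hz2
        exact Sum.inl_ne_inr hi.symm
      rw [hS, Finset.card_union_of_disjoint hdisj, Finset.card_image_of_injective _ hinl,
        Finset.card_image_of_injective _ Sum.inr_injective, card_SPf hq2 hpe hcard,
        Finset.card_univ, Fintype.card_fin]
      have h3 : q ≤ q ^ 4 := Nat.le_self_pow (by omega) q
      have h4 : (q ^ 2) ^ 2 = q ^ 4 := by ring
      omega
    set T : Finset β := (Bf (K := K) q).image Sum.inl with hT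
    set ℓ : β → Finset β := fun z =>
      (lineS q (tl q (Sum.elim id (fun _ => (0 : V3 K)) z))).image Sum.inl with hℓ
    have hmemT : ∀ P ∈ T, ∃ v, v ∈ Bf (K := K) q ∧ P = Sum.inl v := by
      intro P hP
      rw [hT, Finset.mem_image] at hP
      obtain ⟨v, hv, rfl⟩ := hP
      exact ⟨v, hv, rfl⟩
    have hℓinl : ∀ v : V3 K, ℓ (Sum.inl v) = (lineS q (tl q v)).image Sum.inl := by
      intro v; rw [hℓ]; simp only [Sum.elim_inl, id_eq]
    apply no_completion (q ^ 2) hq2n S A hScard T ℓ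
    · intro P hP
      obtain ⟨v, hv, rfl⟩ := hmemT P hP
      rw [hℓinl, hA, Finset.mem_image]
      exact ⟨tl q v, (tl_spec hq2 hpe hcard hv).1, rfl⟩
    · intro P hP Q hQ hPQ
      obtain ⟨v, hv, rfl⟩ := hmemT P hP
      obtain ⟨w, hw, rfl⟩ := hmemT Q hQ
      have hvw : v ≠ w := fun hc => hPQ (by rw [hc])
      obtain ⟨htlv, htgv⟩ := tl_spec hq2 hpe hcard hv
      obtain ⟨htlw, htgw⟩ := tl_spec hq2 hpe hcard hw
      have hab : tl q v ≠ tl q w := by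
        intro hc
        exact hvw (by rw [← htgv, ← htgw, hc])
      constructor
      · rw [hℓinl, hℓinl]
        intro hc
        exact hab (lineS_inj hq2 hpe hcard htlv htlw (Finset.image_injective hinl hc))
      · rw [hℓinl, hℓinl]
        rw [Finset.nonempty_iff_ne_empty]
        intro hc
        rw [← Finset.image_inter _ _ hinl] at hc
        have hc2 : lineS q (tl q v) ∩ lineS q (tl q w) = ∅ := by
          have := Finset.image_injective hinl (f := Sum.inl)
          rw [← Finset.image_empty (Sum.inl : V3 K → β)] at hc
          exact this hc
        have := (parallel_iff hq2 hpe hcard htlv htlw hab).mp hc2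
        rw [htgv, htgw] at this
        exact hvw this
    · rw [hT, Finset.card_image_of_injective _ hinl, card_Bf hq2 hpe hcard]
      omega

end Stmt14


/-- for every prime power q there exists a partial affine plane of order q²
with exactly q⁴ − q lines in which parallelism is an equivalence relation and which cannot
be completed to an affine plane of order q². -/
theorem stmt_14 (q : ℕ) (hq : IsPrimePow q) :
    ∃ (β : Type) (_ : DecidableEq β) (S : Finset β) (A : Finset (Finset β)),
      S.card = (q ^ 2) ^ 2 ∧
      (∀ L ∈ A, L ⊆ S ∧ L.card = q ^ 2) ∧
      (∀ L ∈ A, ∀ M ∈ A, L ≠ M → (L ∩ M).card ≤ 1) ∧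
      A.card = q ^ 4 - q ∧
      Equivalence (fun (L M : {x // x ∈ A}) => L.1 = M.1 ∨ L.1 ∩ M.1 = ∅) ∧
      ¬ ∃ A' : Finset (Finset β), A ⊆ A' ∧ (∀ L ∈ A', L ⊆ S ∧ L.card = q ^ 2) ∧
        ∀ P ∈ S, ∀ Q ∈ S, P ≠ Q → ∃! L, L ∈ A' ∧ P ∈ L ∧ Q ∈ L := by
  exact Stmt14.stmt_14' q hq
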